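/- If a topological space X is not a Baire space, then the countable power X^ω is meager in itself. -/

import Mathlib

open Set Function

/-- Preimage of a closed set with empty interior under a continuous open map has empty
interior. -/
lemma preimage_nowhereDense {α β : Type*} [TopologicalSpace α] [TopologicalSpace β]
    {φ : α → β} (hc : Continuous φ) (ho : IsOpenMap φ) {C : Set β} (hC : IsClosed C)
    (hCi : interior C = ∅) : IsNowhereDense (φ ⁻¹' C) := by
  have hcl : IsClosed (φ ⁻¹' C) := hC.preimage hc
  rw [hcl.isNowhereDense_iff]
  by_contra hne
  obtain ⟨x, hx⟩ := Set.nonempty_iff_ne_empty.2 hne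
  have h0 : φ '' interior (φ ⁻¹' C) ⊆ C := by
    rintro _ ⟨y, hy, rfl⟩; exact interior_subset (s := φ ⁻¹' C) hy
  have h1 : φ '' interior (φ ⁻¹' C) ⊆ interior C :=
    interior_maximal h0 (ho _ isOpen_interior)
  have := h1 ⟨x, hx, rfl⟩
  rw [hCi] at this
  exact this

/-- If `X` is not a Baire space, then `X^ω` is meager in itself. -/
theorem not_baire_power_meager {X : Type*} [TopologicalSpace X]
    (h : ¬ BaireSpace X) :
    IsMeagre (Set.univ : Set (ℕ → X)) := by
  -- extract a sequence of dense open sets with non-dense intersection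
  have h' : ¬ ∀ f : ℕ → Set X, (∀ n, IsOpen (f n)) → (∀ n, Dense (f n)) →
      Dense (⋂ n, f n) := fun hf => h ⟨hf⟩
  push_neg at h'
  obtain ⟨f, hfo, hfd, hnd⟩ := h' 
  -- get a nonempty open set U disjoint from ⋂ f
  rw [dense_iff_inter_open] at hnd
  push_neg at hnd
  obtain ⟨U, hUo, hUne, hUdisj⟩ := hnd
  -- each (f k)ᶜ is closed with empty interior
  have hfc : ∀ k, IsClosed (f k)ᶜ := fun k => (hfo k).isClosed_compl
  have hfi : ∀ k, interior (f k)ᶜ = ∅ := fun k => by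
    rw [interior_compl, (hfd k).closure_eq, compl_univ]
  -- the big product of Uᶜ is closed with empty interior
  have hBnd : IsNowhereDense (Set.univ.pi fun _ : ℕ => (Uᶜ : Set X)) := by
    have hcl : IsClosed (Set.univ.pi fun _ : ℕ => (Uᶜ : Set X)) :=
      isClosed_set_pi fun _ _ => hUo.isClosed_compl
    rw [hcl.isNowhereDense_iff]
    by_contra hne
    obtain ⟨g, hg⟩ := Set.nonempty_iff_ne_empty.2 hne
    obtain ⟨I, u, hu, hsub⟩ := isOpen_pi_iff.1 isOpen_interior g hg
    obtain ⟨n, hn⟩ := I.exists_notMem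
    obtain ⟨x, hx⟩ := hUne
    have hmem : Function.update g n x ∈ (I : Set ℕ).pi u := by
      intro i hi
      rw [Function.update_of_ne (by rintro rfl; exact hn hi)]
      exact (hu i hi).2
    have := interior_subset (hsub hmem) n (mem_univ n)
    rw [Function.update_self] at this
    exact this hx
  -- assemble the cover
  have key : (Set.univ : Set (ℕ → X)) ⊆
      (⋃ n, ⋃ k, (fun g : ℕ → X => g n) ⁻¹' (f k)ᶜ) ∪
        Set.univ.pi fun _ : ℕ => (Uᶜ : Set X) := by
    intro g _
    by_cases hg : ∀ n, g n ∉ U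
    · exact Or.inr fun n _ => hg n
    · push_neg at hg
      obtain ⟨n, hn⟩ := hg
      have : g n ∉ ⋂ k, f k := fun hmem => by
        have : g n ∈ U ∩ ⋂ k, f k := ⟨hn, hmem⟩
        rw [hUdisj] at this; exact this
      rw [Set.mem_iInter] at this
      push_neg at this
      obtain ⟨k, hk⟩ := this
      exact Or.inl (Set.mem_iUnion.2 ⟨n, Set.mem_iUnion.2 ⟨k, hk⟩⟩)
  refine IsMeagre.mono key ?_
  have hA : IsMeagre (⋃ n, ⋃ k, (fun g : ℕ → X => g n) ⁻¹' (f k)ᶜ) := by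
    refine isMeagre_iUnion fun n => isMeagre_iUnion fun k => ?_
    rw [isMeagre_iff_countable_union_isNowhereDense]
    refine ⟨{(fun g : ℕ → X => g n) ⁻¹' (f k)ᶜ}, ?_, Set.countable_singleton _, by simp⟩
    simpa using preimage_nowhereDense (continuous_apply n) (isOpenMap_eval (X := fun _ : ℕ => X) n)
      (hfc k) (hfi k)
  have hB : IsMeagre (Set.univ.pi fun _ : ℕ => (Uᶜ : Set X)) := by
    rw [isMeagre_iff_countable_union_isNowhereDense]
    exact ⟨{Set.univ.pi fun _ : ℕ => (Uᶜ : Set X)}, by simpa using hBnd,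
      Set.countable_singleton _, by simp⟩
  rw [IsMeagre, Set.compl_union]
  exact Filter.inter_mem hA hB
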